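/- arXiv:2202.01836 — 3 statements merged into one kernel-verified Lean document; each statement's English description precedes it below -/
import Mathlib

section
/- Let q ∈ [0,1) and α, β > 0, γ, δ ≥ 0. Let M be a real vector space, D, E : M → M linear maps, W : M → ℝ a linear functional, and V ∈ M, satisfying the DEHP algebra relations: D∘E − q·(E∘D) = D + E, W∘(α·E − γ·D) = W, and (β·D − δ·E)(V) = V. For each N ≥ 1 define f_N : {0,1}^N → ℝ by f_N(τ) := W( (τ₁D + (1−τ₁)E)∘(τ₂D + (1−τ₂)E)∘⋯∘(τ_N D + (1−τ_N)E) (V) ), the composition ordered left to right by increasing index. Then L* f_N(τ) = 0 for every N ≥ 1 and every τ ∈ {0,1}^N, where L* is the open ASEP adjoint generator. -/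
open Finset

/-- Boundary part of the open ASEP adjoint generator at the left reservoir (site 1). -/
noncomputable def Lleft {n : ℕ} (α γ : ℝ) (f : (Fin (n + 1) → Bool) → ℝ)
    (τ : Fin (n + 1) → Bool) : ℝ :=
  if τ 0 = false then γ * f (Function.update τ 0 true) - α * f τ
  else α * f (Function.update τ 0 false) - γ * f τ

/-- Bulk part of the open ASEP adjoint generator on the bond `(i, i+1)`. -/
noncomputable def Lbulk {n : ℕ} (q : ℝ) (f : (Fin (n + 1) → Bool) → ℝ)
    (τ : Fin (n + 1) → Bool) (i : Fin n) : ℝ :=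
  if τ i.castSucc = false ∧ τ i.succ = true then
    f (Function.update (Function.update τ i.castSucc true) i.succ false) - q * f τ
  else if τ i.castSucc = true ∧ τ i.succ = false then
    q * f (Function.update (Function.update τ i.castSucc false) i.succ true) - f τ
  else 0

/-- Boundary part of the open ASEP adjoint generator at the right reservoir (site N). -/
noncomputable def Lright {n : ℕ} (β δ : ℝ) (f : (Fin (n + 1) → Bool) → ℝ)
    (τ : Fin (n + 1) → Bool) : ℝ :=
  if τ (Fin.last n) = false then β * f (Function.update τ (Fin.last n) true) - δ * f τ
  else δ * f (Function.update τ (Fin.last n) false) - β * f τ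

/-- The open ASEP adjoint generator `L* = L*_ℓ + ∑ᵢ L*_{i,i+1} + L*_r` on `{0,1}^N`,
`N = n+1`. -/
noncomputable def Lstar {n : ℕ} (q α β γ δ : ℝ) (f : (Fin (n + 1) → Bool) → ℝ)
    (τ : Fin (n + 1) → Bool) : ℝ :=
  Lleft α γ f τ + (∑ i : Fin n, Lbulk q f τ i) + Lright β δ f τ

/-- The matrix product `(τ₁ D + (1-τ₁) E) ∘ ⋯ ∘ (τ_N D + (1-τ_N) E)` applied to `V`,
ordered left to right by increasing index. -/
noncomputable def mpaProduct {n : ℕ} {M : Type*} [AddCommGroup M] [Module ℝ M]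
    (D E : M →ₗ[ℝ] M) (τ : Fin (n + 1) → Bool) (V : M) : M :=
  (List.finRange (n + 1)).foldr (fun i v => (if τ i then D else E) v) V

/- ### Auxiliary machinery -/

/-- Product of the operators selected by `τ` along a list of sites, as a linear map. -/
noncomputable def PL {m : ℕ} {M : Type*} [AddCommGroup M] [Module ℝ M]
    (D E : M →ₗ[ℝ] M) (τ : Fin m → Bool) (l : List (Fin m)) : M →ₗ[ℝ] M :=
  l.foldr (fun i φ => (if τ i then D else E) ∘ₗ φ) LinearMap.id

lemma PL_nil {m : ℕ} {M : Type*} [AddCommGroup M] [Module ℝ M]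
    (D E : M →ₗ[ℝ] M) (τ : Fin m → Bool) : PL D E τ [] = LinearMap.id := rfl

lemma PL_cons {m : ℕ} {M : Type*} [AddCommGroup M] [Module ℝ M]
    (D E : M →ₗ[ℝ] M) (τ : Fin m → Bool) (i : Fin m) (l : List (Fin m)) :
    PL D E τ (i :: l) = (if τ i then D else E) ∘ₗ PL D E τ l := rfl

lemma PL_append {m : ℕ} {M : Type*} [AddCommGroup M] [Module ℝ M]
    (D E : M →ₗ[ℝ] M) (τ : Fin m → Bool) (l₁ l₂ : List (Fin m)) :
    PL D E τ (l₁ ++ l₂) = PL D E τ l₁ ∘ₗ PL D E τ l₂ := by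
  induction l₁ with
  | nil => simp [PL_nil]
  | cons a l ih => simp [PL_cons, ih, LinearMap.comp_assoc]

lemma PL_apply {m : ℕ} {M : Type*} [AddCommGroup M] [Module ℝ M]
    (D E : M →ₗ[ℝ] M) (τ : Fin m → Bool) (l : List (Fin m)) (v : M) :
    PL D E τ l v = l.foldr (fun i w => (if τ i then D else E) w) v := by
  induction l with
  | nil => rfl
  | cons a l ih => rw [List.foldr_cons, PL_cons, LinearMap.comp_apply, ih]

lemma mpa_eq_PL {n : ℕ} {M : Type*} [AddCommGroup M] [Module ℝ M]
    (D E : M →ₗ[ℝ] M) (τ : Fin (n + 1) → Bool) (V : M) :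
    mpaProduct D E τ V = PL D E τ (List.finRange (n + 1)) V := by
  rw [mpaProduct, PL_apply]

lemma PL_update {m : ℕ} {M : Type*} [AddCommGroup M] [Module ℝ M]
    (D E : M →ₗ[ℝ] M) (τ : Fin m → Bool) (l : List (Fin m)) {j : Fin m} (b : Bool)
    (hj : j ∉ l) : PL D E (Function.update τ j b) l = PL D E τ l := by
  induction l with
  | nil => rfl
  | cons a l ih =>
    have haj : a ≠ j := fun h => hj (h ▸ (List.mem_cons_self : a ∈ a :: l))
    have hjl : j ∉ l := fun h => hj (List.mem_cons_of_mem _ h)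
    rw [PL_cons, PL_cons, Function.update_of_ne haj, ih hjl]

lemma finRange_drop_eq {m k : ℕ} (h : k < m) :
    (List.finRange m).drop k = ⟨k, h⟩ :: (List.finRange m).drop (k + 1) := by
  rw [List.drop_eq_getElem_cons (by simpa using h)]
  simp

lemma finRange_eq_take_cons (m : ℕ) (i : Fin m) :
    List.finRange m
      = (List.finRange m).take i.val ++ i :: (List.finRange m).drop (i.val + 1) := by
  conv_lhs => rw [← List.take_append_drop i.val (List.finRange m)]
  rw [finRange_drop_eq i.isLt]

lemma finRange_not_mem_take {m k : ℕ} (j : Fin m) (hk : k ≤ j.val) :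
    j ∉ (List.finRange m).take k := by
  intro h
  rw [List.mem_iff_getElem] at h
  obtain ⟨p, hp, he⟩ := h
  have hpk : p < k := by simp at hp; omega
  have hv : p = (j : ℕ) := by
    have := congrArg Fin.val he
    simpa using this
  omega

lemma finRange_not_mem_drop {m k : ℕ} (j : Fin m) (hk : j.val < k) :
    j ∉ (List.finRange m).drop k := by
  intro h
  rw [List.mem_iff_getElem] at h
  obtain ⟨p, hp, he⟩ := h
  have hv : k + p = (j : ℕ) := by
    have := congrArg Fin.val he
    simpa using this
  omega

lemma PL_split {m : ℕ} {M : Type*} [AddCommGroup M] [Module ℝ M]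
    (D E : M →ₗ[ℝ] M) (σ : Fin m → Bool) (V : M) (k : ℕ) (h : k < m) :
    PL D E σ (List.finRange m) V
      = PL D E σ ((List.finRange m).take k)
          ((if σ ⟨k, h⟩ then D else E) (PL D E σ ((List.finRange m).drop (k + 1)) V)) := by
  conv_lhs => rw [finRange_eq_take_cons m ⟨k, h⟩]
  rw [PL_append, PL_cons]
  rfl

lemma telescope_sum (f : ℕ → ℝ) (n : ℕ) :
    ∑ i ∈ Finset.range n, (f i - f (i + 1)) = f 0 - f n := by
  induction n with
  | zero => simp
  | succ n ih => rw [Finset.sum_range_succ, ih]; ring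

/-- Matrix product ansatz (Derrida–Evans–Hakim–Pasquier): any representation of the
DEHP algebra `DE - qED = D + E`, `W(αE - γD) = W`, `(βD - δE)V = V` yields an
(unnormalized) stationary measure `f_N(τ) = ⟨W| ∏ᵢ (τᵢ D + (1-τᵢ) E) |V⟩` for open
ASEP: `L* f_N = 0` for every `N ≥ 1`. -/
theorem mpa_stationary {M : Type*} [AddCommGroup M] [Module ℝ M]
    (q α β γ δ : ℝ) (hq0 : 0 ≤ q) (hq1 : q < 1) (hα : 0 < α) (hβ : 0 < β)
    (hγ : 0 ≤ γ) (hδ : 0 ≤ δ)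
    (D E : M →ₗ[ℝ] M) (W : M →ₗ[ℝ] ℝ) (V : M)
    (hDE : D ∘ₗ E - q • (E ∘ₗ D) = D + E)
    (hW : W ∘ₗ (α • E - γ • D) = W)
    (hV : (β • D - δ • E) V = V) :
    ∀ (n : ℕ) (τ : Fin (n + 1) → Bool),
      Lstar q α β γ δ (fun σ => W (mpaProduct D E σ V)) τ = 0 := by
  intro n τ
  classical
  set f : (Fin (n + 1) → Bool) → ℝ := fun σ => W (mpaProduct D E σ V) with hfdef
  set g : Fin (n + 1) → ℝ :=
    fun i => W (PL D E τ ((List.finRange (n + 1)).take (i : ℕ)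
      ++ (List.finRange (n + 1)).drop ((i : ℕ) + 1)) V) with hgdef
  set θ : Fin (n + 1) → ℝ := fun i => (if τ i then (-1 : ℝ) else 1) * g i with hθdef
  -- Left boundary
  have hL : Lleft α γ f τ = -θ 0 := by
    have h0 : (0 : Fin (n + 1)) ∉ (List.finRange (n + 1)).drop (0 + 1) :=
      finRange_not_mem_drop _ (by simp)
    have hmk0 : (⟨0, Nat.succ_pos n⟩ : Fin (n + 1)) = 0 := by
      apply Fin.ext; simp
    set u : M := PL D E τ ((List.finRange (n + 1)).drop (0 + 1)) V with hudef
    have hfσ : ∀ s : Bool, f (Function.update τ 0 s) = W ((if s then D else E) u) := by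
      intro s
      show W (mpaProduct D E (Function.update τ 0 s) V) = _
      rw [mpa_eq_PL, PL_split D E _ V 0 (Nat.succ_pos n), hmk0,
        PL_update D E τ _ s h0, Function.update_self]
      rfl
    have hfτ : f τ = W ((if τ 0 then D else E) u) := by
      have := hfσ (τ 0)
      rwa [Function.update_eq_self] at this
    have hgu : g 0 = W u := by
      have h1 : g 0 = W (PL D E τ ((List.finRange (n + 1)).take 0
          ++ (List.finRange (n + 1)).drop (0 + 1)) V) := by
        simp only [hgdef, Fin.val_zero]
      rw [h1, List.take_zero, List.nil_append]
    have hWu : α * W (E u) - γ * W (D u) = W u := by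
      have := LinearMap.congr_fun hW u
      simpa [LinearMap.sub_apply, LinearMap.smul_apply, map_sub, map_smul,
        smul_eq_mul] using this
    cases h0' : τ 0 with
    | false =>
      have hLl : Lleft α γ f τ = γ * f (Function.update τ 0 true) - α * f τ := by
        rw [Lleft, if_pos h0']
      rw [hLl, hfσ, hfτ, h0']
      simp only [hθdef, hgu, h0', if_true, Bool.false_eq_true, if_false]
      linarith [hWu]
    | true =>
      have hLl : Lleft α γ f τ = α * f (Function.update τ 0 false) - γ * f τ := by
        rw [Lleft, if_neg (by simp [h0'])]
      rw [hLl, hfσ, hfτ, h0']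
      simp only [hθdef, hgu, h0', if_true, Bool.false_eq_true, if_false]
      linarith [hWu]
  -- Right boundary
  have hRt : Lright β δ f τ = θ (Fin.last n) := by
    have hdropn : (List.finRange (n + 1)).drop (n + 1) = [] := by
      apply List.drop_eq_nil_of_le
      simp
    have h1 : Fin.last n ∉ (List.finRange (n + 1)).take n :=
      finRange_not_mem_take _ (le_refl n)
    have hmkl : (⟨n, Nat.lt_succ_self n⟩ : Fin (n + 1)) = Fin.last n := rfl
    set A : M →ₗ[ℝ] M := PL D E τ ((List.finRange (n + 1)).take n) with hAdef
    have hfσ : ∀ s : Bool, f (Function.update τ (Fin.last n) s)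
        = W (A ((if s then D else E) V)) := by
      intro s
      show W (mpaProduct D E (Function.update τ (Fin.last n) s) V) = _
      rw [mpa_eq_PL, PL_split D E _ V n (Nat.lt_succ_self n), hmkl, hdropn,
        PL_update D E τ _ s h1, Function.update_self]
      rfl
    have hfτ : f τ = W (A ((if τ (Fin.last n) then D else E) V)) := by
      have := hfσ (τ (Fin.last n))
      rwa [Function.update_eq_self] at this
    have hgl : g (Fin.last n) = W (A V) := by
      have h2 : g (Fin.last n) = W (PL D E τ ((List.finRange (n + 1)).take n
          ++ (List.finRange (n + 1)).drop (n + 1)) V) := rfl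
      rw [h2, hdropn, List.append_nil]
    have hWV : β * W (A (D V)) - δ * W (A (E V)) = W (A V) := by
      have := congrArg (fun v => W (A v)) hV
      simpa [LinearMap.sub_apply, LinearMap.smul_apply, map_sub, map_smul,
        smul_eq_mul] using this
    cases h0' : τ (Fin.last n) with
    | false =>
      have hLr : Lright β δ f τ = β * f (Function.update τ (Fin.last n) true) - δ * f τ := by
        rw [Lright, if_pos h0']
      rw [hLr, hfσ, hfτ, h0']
      simp only [hθdef, hgl, h0', if_true, Bool.false_eq_true, if_false]
      linarith [hWV]
    | true =>
      have hLr : Lright β δ f τ = δ * f (Function.update τ (Fin.last n) false) - β * f τ := by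
        rw [Lright, if_neg (by simp [h0'])]
      rw [hLr, hfσ, hfτ, h0']
      simp only [hθdef, hgl, h0', if_true, Bool.false_eq_true, if_false]
      linarith [hWV]
  -- Bulk
  have hB : ∀ i : Fin n, Lbulk q f τ i = θ i.castSucc - θ i.succ := by
    intro i
    have hab : i.castSucc ≠ i.succ := by
      intro h
      have := congrArg Fin.val h
      simp [Fin.coe_castSucc, Fin.val_succ] at this
    have h1 : i.castSucc ∉ (List.finRange (n + 1)).take (i : ℕ) :=
      finRange_not_mem_take _ (le_of_eq rfl)
    have h2 : i.succ ∉ (List.finRange (n + 1)).take (i : ℕ) :=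
      finRange_not_mem_take _ (by simp)
    have h3 : i.castSucc ∉ (List.finRange (n + 1)).drop ((i : ℕ) + 2) :=
      finRange_not_mem_drop _ (by simp)
    have h4 : i.succ ∉ (List.finRange (n + 1)).drop ((i : ℕ) + 2) :=
      finRange_not_mem_drop _ (by simp)
    have hdrop : (List.finRange (n + 1)).drop ((i : ℕ) + 1)
        = i.succ :: (List.finRange (n + 1)).drop ((i : ℕ) + 2) := by
      rw [finRange_drop_eq (show (i : ℕ) + 1 < n + 1 by omega)]
      rfl
    have htake : (List.finRange (n + 1)).take ((i : ℕ) + 1)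
        = (List.finRange (n + 1)).take (i : ℕ) ++ [i.castSucc] := by
      rw [List.take_succ]
      congr 1
      have h' : (i : ℕ) < (List.finRange (n + 1)).length := by simp
      rw [List.getElem?_eq_getElem h']
      simp
      rfl
    set A : M →ₗ[ℝ] M := PL D E τ ((List.finRange (n + 1)).take (i : ℕ)) with hAdef
    set w : M := PL D E τ ((List.finRange (n + 1)).drop ((i : ℕ) + 2)) V with hwdef
    have hsplitPL : ∀ σ : Fin (n + 1) → Bool,
        PL D E σ (List.finRange (n + 1)) V
          = PL D E σ ((List.finRange (n + 1)).take (i : ℕ))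
              ((if σ i.castSucc then D else E) ((if σ i.succ then D else E)
                (PL D E σ ((List.finRange (n + 1)).drop ((i : ℕ) + 2)) V))) := by
      intro σ
      rw [PL_split D E σ V (i : ℕ) (by omega), hdrop, PL_cons]
      rfl
    have hfστ : ∀ s t : Bool,
        f (Function.update (Function.update τ i.castSucc s) i.succ t)
          = W (A ((if s then D else E) ((if t then D else E) w))) := by
      intro s t
      show W (mpaProduct D E (Function.update (Function.update τ i.castSucc s) i.succ t) V) = _
      rw [mpa_eq_PL, hsplitPL]
      rw [PL_update D E (Function.update τ i.castSucc s)
        ((List.finRange (n + 1)).take (i : ℕ)) t h2]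
      rw [PL_update D E τ ((List.finRange (n + 1)).take (i : ℕ)) s h1]
      rw [PL_update D E (Function.update τ i.castSucc s)
        ((List.finRange (n + 1)).drop ((i : ℕ) + 2)) t h4]
      rw [PL_update D E τ ((List.finRange (n + 1)).drop ((i : ℕ) + 2)) s h3]
      have e1 : Function.update (Function.update τ i.castSucc s) i.succ t i.castSucc = s := by
        rw [Function.update_of_ne hab, Function.update_self]
      have e2 : Function.update (Function.update τ i.castSucc s) i.succ t i.succ = t :=
        Function.update_self _ _ _
      rw [e1, e2]
    have hfτ : f τ = W (A ((if τ i.castSucc then D else E)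
        ((if τ i.succ then D else E) w))) := by
      have := hfστ (τ i.castSucc) (τ i.succ)
      rwa [Function.update_eq_self, Function.update_eq_self] at this
    have hga : g i.castSucc = W (A ((if τ i.succ then D else E) w)) := by
      have h0 : g i.castSucc = W (PL D E τ ((List.finRange (n + 1)).take (i : ℕ)
          ++ (List.finRange (n + 1)).drop ((i : ℕ) + 1)) V) := rfl
      rw [h0, hdrop, PL_append, PL_cons]
      rfl
    have hgb : g i.succ = W (A ((if τ i.castSucc then D else E) w)) := by
      have h0 : g i.succ = W (PL D E τ ((List.finRange (n + 1)).take ((i : ℕ) + 1)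
          ++ (List.finRange (n + 1)).drop ((i : ℕ) + 1 + 1)) V) := rfl
      rw [h0, htake, List.append_assoc, PL_append, PL_append, PL_cons, PL_nil]
      rfl
    have hkey : W (A (D (E w))) - q * W (A (E (D w))) = W (A (D w)) + W (A (E w)) := by
      have h0 := LinearMap.congr_fun hDE w
      have := congrArg (fun v => W (A v)) h0
      simpa [LinearMap.sub_apply, LinearMap.smul_apply, LinearMap.add_apply,
        LinearMap.comp_apply, map_sub, map_smul, map_add, smul_eq_mul] using this
    cases ha : τ i.castSucc with
    | false =>
      cases hb : τ i.succ with
      | false =>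
        have hLb : Lbulk q f τ i = 0 := by
          rw [Lbulk, if_neg (by simp [hb]), if_neg (by simp [ha])]
        rw [hLb]
        simp only [hθdef, ha, hb, hga, hgb, if_true, Bool.false_eq_true,
          Bool.true_eq_false, if_false]
        ring
      | true =>
        have hLb : Lbulk q f τ i
            = f (Function.update (Function.update τ i.castSucc true) i.succ false)
              - q * f τ := by
          rw [Lbulk, if_pos ⟨ha, hb⟩]
        rw [hLb, hfστ, hfτ, ha, hb]
        simp only [hθdef, ha, hb, hga, hgb, if_true, Bool.false_eq_true,
          Bool.true_eq_false, if_false]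
        linarith [hkey]
    | true =>
      cases hb : τ i.succ with
      | false =>
        have hLb : Lbulk q f τ i
            = q * f (Function.update (Function.update τ i.castSucc false) i.succ true)
              - f τ := by
          rw [Lbulk, if_neg (by simp [ha]), if_pos ⟨ha, hb⟩]
        rw [hLb, hfστ, hfτ, ha, hb]
        simp only [hθdef, ha, hb, hga, hgb, if_true, Bool.false_eq_true,
          Bool.true_eq_false, if_false]
        linarith [hkey]
      | true =>
        have hLb : Lbulk q f τ i = 0 := by
          rw [Lbulk, if_neg (by simp [ha]), if_neg (by simp [hb])]
        rw [hLb]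
        simp only [hθdef, ha, hb, hga, hgb, if_true, Bool.false_eq_true,
          Bool.true_eq_false, if_false]
        ring
  -- Telescoping
  have hT : ∑ i : Fin n, (θ i.castSucc - θ i.succ) = θ 0 - θ (Fin.last n) := by
    set θ' : ℕ → ℝ := fun k => if h : k < n + 1 then θ ⟨k, h⟩ else 0 with hθ'def
    have e1 : ∀ i : Fin n, θ i.castSucc = θ' (i : ℕ) := by
      intro i
      have h : (i : ℕ) < n + 1 := by omega
      simp only [hθ'def, dif_pos h]
      congr 1
    have e2 : ∀ i : Fin n, θ i.succ = θ' ((i : ℕ) + 1) := by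
      intro i
      have h : (i : ℕ) + 1 < n + 1 := by omega
      simp only [hθ'def, dif_pos h]
      congr 1
    calc ∑ i : Fin n, (θ i.castSucc - θ i.succ)
        = ∑ i : Fin n, (θ' (i : ℕ) - θ' ((i : ℕ) + 1)) := by
          refine Finset.sum_congr rfl fun i _ => ?_
          rw [e1 i, e2 i]
      _ = ∑ k ∈ Finset.range n, (θ' k - θ' (k + 1)) :=
          Fin.sum_univ_eq_sum_range (fun k => θ' k - θ' (k + 1)) n
      _ = θ' 0 - θ' n := telescope_sum θ' n
      _ = θ 0 - θ (Fin.last n) := by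
          simp only [hθ'def, dif_pos (Nat.succ_pos n), dif_pos (Nat.lt_succ_self n)]
          congr 1
  -- Assemble
  show Lleft α γ f τ + (∑ i : Fin n, Lbulk q f τ i) + Lright β δ f τ = 0
  rw [hL, hRt, Finset.sum_congr rfl (fun i _ => hB i), hT]
  ring
end

section
/- Let q ∈ [0,1) and α, β > 0, γ, δ ≥ 0 with αβ ≠ γδ, and suppose (1−q)(α+δ)(β+γ) = (α+β+γ+δ)(αβ−γδ). Set d := (α+δ)/(αβ−γδ) and e := (β+γ)/(αβ−γδ), and for each N ≥ 1 define f_N : {0,1}^N → ℝ by f_N(τ) := ∏_{i=1}^N (τ_i d + (1−τ_i) e). Then L* f_N(τ) = 0 for every N ≥ 1 and every τ ∈ {0,1}^N; that is, the product measure proportional to f_N is stationary for open ASEP. -/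
open Finset

section Aux
variable {m : ℕ} (d e : ℝ)

lemma prod_w_update (τ : Fin m → Bool) (i : Fin m) (b : Bool) :
    (∏ j, (if Function.update τ i b j then d else e)) =
      (if b then d else e) * ∏ j ∈ univ.erase i, (if τ j then d else e) := by
  rw [← Finset.mul_prod_erase _ (fun j => if Function.update τ i b j then d else e)
      (mem_univ i), Function.update_self]
  congr 1
  exact Finset.prod_congr rfl fun j hj => by
    rw [Function.update_of_ne (Finset.ne_of_mem_erase hj)]

lemma prod_w_split (τ : Fin m → Bool) (i : Fin m) :
    (∏ j, (if τ j then d else e)) =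
      (if τ i then d else e) * ∏ j ∈ univ.erase i, (if τ j then d else e) :=
  (Finset.mul_prod_erase _ _ (mem_univ i)).symm

lemma prod_w_erase_split (τ : Fin m → Bool) (a b : Fin m) (hab : a ≠ b) :
    (∏ j ∈ univ.erase b, (if τ j then d else e)) =
      (if τ a then d else e) * ∏ j ∈ (univ.erase b).erase a, (if τ j then d else e) :=
  (Finset.mul_prod_erase _ _ (by simp [hab])).symm

lemma prod_w_update_erase (τ : Fin m → Bool) (a b : Fin m) (hab : a ≠ b) (x : Bool) :
    (∏ j ∈ univ.erase b, (if Function.update τ a x j then d else e)) =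
      (if x then d else e) * ∏ j ∈ (univ.erase b).erase a, (if τ j then d else e) := by
  rw [← Finset.mul_prod_erase _ _ (show a ∈ univ.erase b by simp [hab]),
      Function.update_self]
  congr 1
  exact Finset.prod_congr rfl fun j hj => by
    rw [Function.update_of_ne (Finset.ne_of_mem_erase hj)]

end Aux

/-- If `(1-q)(α+δ)(β+γ) = (α+β+γ+δ)(αβ-γδ)` with `αβ ≠ γδ`, then the product
measure with weights `f_N(τ) = ∏ᵢ (τᵢ d + (1-τᵢ) e)`, where `d = (α+δ)/(αβ-γδ)`
and `e = (β+γ)/(αβ-γδ)`, is stationary for open ASEP: `L* f_N = 0` for all `N ≥ 1`. -/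
theorem bernoulli_product_stationary (q α β γ δ : ℝ) (hq0 : 0 ≤ q) (hq1 : q < 1)
    (hα : 0 < α) (hβ : 0 < β) (hγ : 0 ≤ γ) (hδ : 0 ≤ δ)
    (hne : α * β ≠ γ * δ)
    (hsolv : (1 - q) * (α + δ) * (β + γ) = (α + β + γ + δ) * (α * β - γ * δ)) :
    ∀ (n : ℕ) (τ : Fin (n + 1) → Bool),
      Lstar q α β γ δ
        (fun σ => ∏ i : Fin (n + 1),
          (if σ i then (α + δ) / (α * β - γ * δ) else (β + γ) / (α * β - γ * δ))) τ = 0 := by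
  intro n τ
  have hD : α * β - γ * δ ≠ 0 := sub_ne_zero.mpr hne
  set d : ℝ := (α + δ) / (α * β - γ * δ) with hd
  set e : ℝ := (β + γ) / (α * β - γ * δ) with he
  have hl : γ * d - α * e = -1 := by
    rw [hd, he]; field_simp; ring
  have hr : β * d - δ * e = 1 := by
    rw [hd, he, mul_div_assoc', mul_div_assoc', div_sub_div_same, div_eq_one_iff_eq hD]; ring
  have hde : (1 - q) * (d * e) = d + e := by
    rw [hd, he, ← add_div, div_mul_div_comm, mul_div_assoc',
      div_eq_div_iff (mul_ne_zero hD hD) hD]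
    linear_combination (α * β - γ * δ) * hsolv
  set T : Fin (n + 1) → ℝ := fun k =>
    (if τ k then (1:ℝ) else -1) * ∏ j ∈ univ.erase k, (if τ j then d else e) with hT
  have P0 := fun (k : Fin (n+1)) => ∏ j ∈ univ.erase k, (if τ j then d else e)
  -- left boundary
  have hleft : Lleft α γ
      (fun σ => ∏ i : Fin (n + 1), (if σ i then d else e)) τ = T 0 := by
    unfold Lleft
    simp only [hT]
    cases h0 : τ 0 with
    | false =>
        rw [if_pos rfl, prod_w_update, prod_w_split d e τ 0, h0]
        simp only [Bool.false_eq_true, if_false, if_true]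
        linear_combination (∏ j ∈ univ.erase (0 : Fin (n+1)), (if τ j then d else e)) * hl
    | true =>
        rw [if_neg (by simp), prod_w_update, prod_w_split d e τ 0, h0]
        simp only [Bool.false_eq_true, if_false, if_true]
        linear_combination (-(∏ j ∈ univ.erase (0 : Fin (n+1)), (if τ j then d else e))) * hl
  -- right boundary
  have hright : Lright β δ
      (fun σ => ∏ i : Fin (n + 1), (if σ i then d else e)) τ = -T (Fin.last n) := by
    unfold Lright
    simp only [hT]
    cases h0 : τ (Fin.last n) with
    | false =>
        rw [if_pos rfl, prod_w_update, prod_w_split d e τ (Fin.last n), h0]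
        simp only [Bool.false_eq_true, if_false, if_true]
        linear_combination (∏ j ∈ univ.erase (Fin.last n), (if τ j then d else e)) * hr
    | true =>
        rw [if_neg (by simp), prod_w_update, prod_w_split d e τ (Fin.last n), h0]
        simp only [Bool.false_eq_true, if_false, if_true]
        linear_combination (-(∏ j ∈ univ.erase (Fin.last n), (if τ j then d else e))) * hr
  -- bulk
  have hbulk : ∀ i : Fin n, Lbulk q
      (fun σ => ∏ i : Fin (n + 1), (if σ i then d else e)) τ i = T i.succ - T i.castSucc := by
    intro i
    have hab : i.castSucc ≠ i.succ := (Fin.castSucc_lt_succ : i.castSucc < i.succ).ne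
    have hcomm : (univ.erase i.castSucc).erase i.succ = (univ.erase i.succ).erase i.castSucc :=
      Finset.erase_right_comm
    set Q : ℝ := ∏ j ∈ (univ.erase i.succ).erase i.castSucc, (if τ j then d else e) with hQ
    have hTs : T i.succ = (if τ i.succ then (1:ℝ) else -1) * ((if τ i.castSucc then d else e) * Q) := by
      rw [hT]; simp only
      rw [prod_w_erase_split d e τ i.castSucc i.succ hab]
    have hTc : T i.castSucc = (if τ i.castSucc then (1:ℝ) else -1) * ((if τ i.succ then d else e) * Q) := by
      rw [hT]; simp only
      rw [prod_w_erase_split d e τ i.succ i.castSucc (Ne.symm hab), hcomm]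
    have hf : (∏ j : Fin (n+1), (if τ j then d else e)) =
        (if τ i.castSucc then d else e) * ((if τ i.succ then d else e) * Q) := by
      rw [prod_w_split d e τ i.castSucc]
      congr 1
      rw [prod_w_erase_split d e τ i.succ i.castSucc (Ne.symm hab), hcomm]
    have hup : ∀ x y : Bool,
        (∏ j : Fin (n+1), (if Function.update (Function.update τ i.castSucc x) i.succ y j then d else e)) =
          (if x then d else e) * ((if y then d else e) * Q) := by
      intro x y
      rw [prod_w_split d e _ i.castSucc, Function.update_of_ne hab, Function.update_self]
      congr 1
      rw [prod_w_update_erase d e (Function.update τ i.castSucc x) i.succ i.castSucc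
            (Ne.symm hab)]
      congr 1
      rw [hcomm, hQ]
      refine Finset.prod_congr rfl fun j hj => ?_
      rw [Function.update_of_ne (Finset.ne_of_mem_erase hj)]
    unfold Lbulk
    simp only
    cases ha : τ i.castSucc with
    | false =>
        cases hb : τ i.succ with
        | false =>
            rw [if_neg (by simp), if_neg (by simp), hTs, hTc, ha, hb]
            simp only [Bool.false_eq_true, if_false]
            ring
        | true =>
            rw [if_pos ⟨rfl, rfl⟩, hup, hf, hTs, hTc, ha, hb]
            simp only [Bool.false_eq_true, if_false, if_true]
            linear_combination Q * hde
    | true =>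
        cases hb : τ i.succ with
        | false =>
            rw [if_neg (by simp), if_pos ⟨rfl, rfl⟩, hup, hf, hTs, hTc, ha, hb]
            simp only [Bool.false_eq_true, if_false, if_true]
            linear_combination (-Q) * hde
        | true =>
            rw [if_neg (by simp), if_neg (by simp), hTs, hTc, ha, hb]
            simp only [if_true]
            ring
  -- telescoping
  have htel : (∑ i : Fin n, Lbulk q
      (fun σ => ∏ i : Fin (n + 1), (if σ i then d else e)) τ i) = T (Fin.last n) - T 0 := by
    set F : ℕ → ℝ := fun k => T ⟨min k n, Nat.lt_succ_of_le (min_le_right k n)⟩ with hF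
    have hstep : ∀ i : Fin n, Lbulk q
        (fun σ => ∏ i : Fin (n + 1), (if σ i then d else e)) τ i = F (↑i + 1) - F ↑i := by
      intro i
      rw [hbulk i, hF]
      have h1 : (⟨min (↑i + 1) n, Nat.lt_succ_of_le (min_le_right _ n)⟩ : Fin (n+1)) = i.succ := by
        apply Fin.ext
        simp [Nat.min_eq_left (Nat.succ_le_of_lt i.isLt)]
      have h2 : (⟨min (↑i : ℕ) n, Nat.lt_succ_of_le (min_le_right _ n)⟩ : Fin (n+1)) = i.castSucc := by
        apply Fin.ext
        simp [Nat.min_eq_left (le_of_lt i.isLt)]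
      simp only [h1, h2]
    calc (∑ i : Fin n, Lbulk q
        (fun σ => ∏ i : Fin (n + 1), (if σ i then d else e)) τ i)
        = ∑ i : Fin n, (F (↑i + 1) - F ↑i) := Finset.sum_congr rfl fun i _ => hstep i
      _ = ∑ k ∈ Finset.range n, (F (k + 1) - F k) :=
          Fin.sum_univ_eq_sum_range (fun k => F (k + 1) - F k) n
      _ = F n - F 0 := Finset.sum_range_sub F n
      _ = T (Fin.last n) - T 0 := by
          rw [hF]
          apply congrArg₂ (· - ·) <;> apply congrArg T <;> apply Fin.ext <;> simp [Fin.last]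
  unfold Lstar
  rw [hleft, hright, htel]
  ring
end

section
/- For u ∈ ℝ and r > 0 define K_{iu}(r) := ∫_0^∞ e^{−r cosh w} cos(uw) dw, and set f_u(x) := K_{iu}(e^x) for x ∈ ℝ. Then for every t ∈ ℂ with Re(t) > 0 and every u ∈ ℝ, ∫_{−∞}^{∞} e^{tx} f_u(x) dx = 2^{t−2} Γ((t+iu)/2) Γ((t−iu)/2), where Γ is the complex Gamma function and 2^{t−2} := exp((t−2) log 2). For real t > 0 the right-hand side equals 2^{t−2} |Γ((t+iu)/2)|². -/
open MeasureTheory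

/-- The modified Bessel (Macdonald) function of purely imaginary order,
`K_{iu}(r) = ∫_0^∞ e^{-r cosh w} cos(uw) dw` for `r > 0`. -/
noncomputable def Kiu (u r : ℝ) : ℝ :=
  ∫ w in Set.Ioi (0 : ℝ), Real.exp (-r * Real.cosh w) * Real.cos (u * w)

/-- `f_u(x) = K_{iu}(e^x)`. -/
noncomputable def besselF (u x : ℝ) : ℝ := Kiu u (Real.exp x)

open Set

lemma cpow_real_pos {r : ℝ} (hr : 0 < r) (s : ℂ) :
    (r : ℂ) ^ s = Complex.exp (s * (Real.log r : ℝ)) := by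
  rw [Complex.cpow_def_of_ne_zero (by exact_mod_cast hr.ne'), Complex.ofReal_log hr.le, mul_comm]

lemma integral_Ioi_comp_exp (g : ℝ → ℂ) :
    ∫ r in Ioi (0:ℝ), g r = ∫ x : ℝ, Real.exp x • g (Real.exp x) := by
  have h1 : Real.exp '' Set.univ = Ioi 0 := by
    rw [Set.image_univ, Real.range_exp]
  rw [← h1, integral_image_eq_integral_abs_deriv_smul MeasurableSet.univ
      (fun x _ => (Real.hasDerivAt_exp x).hasDerivWithinAt) Real.exp_injective.injOn g,
    setIntegral_univ]
  simp only [abs_of_pos (Real.exp_pos _)]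

lemma integrableOn_Ioi_iff_exp (g : ℝ → ℂ) :
    IntegrableOn g (Ioi (0:ℝ)) ↔ Integrable (fun x : ℝ => Real.exp x • g (Real.exp x)) := by
  have h1 : Real.exp '' Set.univ = Ioi 0 := by
    rw [Set.image_univ, Real.range_exp]
  rw [← h1, integrableOn_image_iff_integrableOn_abs_deriv_smul MeasurableSet.univ
      (fun x _ => (Real.hasDerivAt_exp x).hasDerivWithinAt) Real.exp_injective.injOn g]
  simp only [abs_of_pos (Real.exp_pos _), integrableOn_univ]

lemma exp_smul_eq (t : ℂ) (c : ℝ) (x : ℝ) :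
    Real.exp x • ((Real.exp x : ℂ) ^ (t - 1) * Complex.exp (-((c : ℂ) * (Real.exp x : ℂ)))) =
      Complex.exp (t * x) * (Real.exp (-(c * Real.exp x)) : ℂ) := by
  rw [Complex.real_smul, cpow_real_pos (Real.exp_pos x), Real.log_exp, Complex.ofReal_exp,
    Complex.ofReal_exp, ← Complex.exp_add, ← Complex.exp_add, ← Complex.exp_add]
  push_cast
  ring_nf

lemma integral_gammaX (t : ℂ) (ht : 0 < t.re) {c : ℝ} (hc : 0 < c) :
    ∫ x : ℝ, Complex.exp (t * x) * (Real.exp (-(c * Real.exp x)) : ℂ) =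
      (1 / (c : ℂ)) ^ t * Complex.Gamma t := by
  have h := Complex.integral_cpow_mul_exp_neg_mul_Ioi ht hc
  rw [integral_Ioi_comp_exp
      (fun r : ℝ => (r : ℂ) ^ (t - 1) * Complex.exp (-((c : ℂ) * (r : ℂ))))] at h
  rw [← h]
  exact integral_congr_ae (Filter.Eventually.of_forall fun x => (exp_smul_eq t c x).symm)

lemma integrable_gammaX (t : ℂ) (ht : 0 < t.re) {c : ℝ} (hc : 0 < c) :
    Integrable (fun x : ℝ => Complex.exp (t * x) * (Real.exp (-(c * Real.exp x)) : ℂ)) := by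
  have base : IntegrableOn
      (fun r : ℝ => (r : ℂ) ^ (t - 1) * Complex.exp (-((c : ℂ) * (r : ℂ)))) (Ioi 0) := by
    have h0 : IntegrableOn (fun r : ℝ => (Real.exp (-r) : ℂ) * (r : ℂ) ^ (t - 1)) (Ioi 0) :=
      Complex.GammaIntegral_convergent ht
    have h1 : IntegrableOn (fun r : ℝ => (Real.exp (-(c * r)) : ℂ) * ((c * r : ℝ) : ℂ) ^ (t - 1))
        (Ioi 0) := by
      have := (integrableOn_Ioi_comp_mul_left_iff
        (fun r : ℝ => (Real.exp (-r) : ℂ) * (r : ℂ) ^ (t - 1)) 0 hc).mpr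
      simp only [mul_zero] at this
      exact this h0
    have h2 := h1.const_mul ((c : ℂ) ^ (-(t - 1)))
    refine MeasureTheory.IntegrableOn.congr_fun h2 (fun r hr => ?_) measurableSet_Ioi
    rw [mem_Ioi] at hr
    rw [Complex.ofReal_mul, Complex.mul_cpow_ofReal_nonneg hc.le hr.le,
      cpow_real_pos hc, cpow_real_pos hc, Complex.ofReal_exp]
    rw [show Complex.exp (-(t - 1) * (Real.log c : ℝ)) *
        (Complex.exp (-(c * r) : ℝ) * (Complex.exp ((t - 1) * (Real.log c : ℝ)) * (r:ℂ) ^ (t-1))) =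
        (r:ℂ) ^ (t-1) * (Complex.exp (-(t - 1) * (Real.log c : ℝ)) *
          Complex.exp ((t - 1) * (Real.log c : ℝ)) * Complex.exp (-(c * r) : ℝ)) by ring,
      ← Complex.exp_add, show -(t-1) * ((Real.log c : ℝ):ℂ) + (t - 1) * ((Real.log c : ℝ):ℂ) = 0
        by ring, Complex.exp_zero, one_mul]
    push_cast
    ring
  rw [integrableOn_Ioi_iff_exp] at base
  exact base.congr (Filter.Eventually.of_forall fun x => exp_smul_eq t c x)

lemma integral_gammaX_real (σ : ℝ) (hσ : 0 < σ) {c : ℝ} (hc : 0 < c) :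
    ∫ x : ℝ, Real.exp (σ * x) * Real.exp (-(c * Real.exp x)) = (1 / c) ^ σ * Real.Gamma σ := by
  have h := integral_gammaX (σ : ℂ) (by simpa using hσ) hc
  have h2 : ∫ x : ℝ, Complex.exp ((σ : ℂ) * x) * (Real.exp (-(c * Real.exp x)) : ℂ) =
      ((∫ x : ℝ, Real.exp (σ * x) * Real.exp (-(c * Real.exp x)) : ℝ) : ℂ) := by
    rw [show (fun x : ℝ => Complex.exp ((σ : ℂ) * x) * (Real.exp (-(c * Real.exp x)) : ℂ)) =
        fun x : ℝ => ((Real.exp (σ * x) * Real.exp (-(c * Real.exp x)) : ℝ) : ℂ) from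
      funext fun x => by rw [← Complex.ofReal_mul σ x, ← Complex.ofReal_exp]; push_cast; ring]
    exact integral_ofReal
  rw [h2] at h
  have h3 : ((1 : ℂ) / (c : ℂ)) ^ (σ : ℂ) = ((1 / c : ℝ) ^ σ : ℝ) := by
    rw [Complex.ofReal_cpow (by positivity)]
    push_cast
    ring_nf
  rw [h3, Complex.Gamma_ofReal] at h
  exact_mod_cast h

lemma one_div_cosh_cpow (t : ℂ) (w : ℝ) :
    (1 / (Real.cosh w : ℂ)) ^ t = Complex.exp (-(t * (Real.log (Real.cosh w) : ℝ))) := by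
  have h : (1 / (Real.cosh w : ℂ)) = ((1 / Real.cosh w : ℝ) : ℂ) := by push_cast; ring
  rw [h, cpow_real_pos (by positivity), one_div, Real.log_inv]
  push_cast
  ring_nf

lemma sech_bound {σ : ℝ} (hσ : 0 < σ) {w : ℝ} (hw : 0 ≤ w) :
    (1 / Real.cosh w) ^ σ ≤ 2 ^ σ * Real.exp (-σ * w) := by
  have h1 : 1 / Real.cosh w ≤ 2 * Real.exp (-w) := by
    rw [div_le_iff₀ (Real.cosh_pos w), Real.cosh_eq]
    rw [show 2 * Real.exp (-w) * ((Real.exp w + Real.exp (-w)) / 2) =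
      Real.exp (-w) * Real.exp w + Real.exp (-w) * Real.exp (-w) by ring, ← Real.exp_add,
      show -w + w = 0 by ring, Real.exp_zero]
    nlinarith [mul_pos (Real.exp_pos (-w)) (Real.exp_pos (-w))]
  calc (1 / Real.cosh w) ^ σ ≤ (2 * Real.exp (-w)) ^ σ :=
        Real.rpow_le_rpow (by positivity) h1 hσ.le
    _ = 2 ^ σ * Real.exp (-σ * w) := by
        rw [Real.mul_rpow (by norm_num) (Real.exp_pos _).le, ← Real.exp_mul]
        ring_nf

lemma integrableOn_Ioi_sech_mul (t : ℂ) (ht : 0 < t.re) (g : ℝ → ℂ) (hg : Continuous g)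
    (hb : ∀ w, ‖g w‖ ≤ 1) :
    IntegrableOn (fun w : ℝ => g w * (1 / (Real.cosh w : ℂ)) ^ t) (Ioi 0) := by
  have hcont : Continuous (fun w : ℝ => g w * (1 / (Real.cosh w : ℂ)) ^ t) := by
    simp_rw [one_div_cosh_cpow]
    exact hg.mul (Complex.continuous_exp.comp (continuous_const.mul
      (Complex.continuous_ofReal.comp
        (Real.continuous_cosh.log fun x => (Real.cosh_pos x).ne'))).neg)
  refine Integrable.mono' (g := fun w => 2 ^ t.re * Real.exp (-t.re * w))
    (((exp_neg_integrableOn_Ioi 0 ht).const_mul _)) hcont.aestronglyMeasurable.restrict ?_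
  refine (ae_restrict_iff' measurableSet_Ioi).mpr (Filter.Eventually.of_forall fun w hw => ?_)
  rw [norm_mul]
  have h2 : ‖(1 / (Real.cosh w : ℂ)) ^ t‖ = (1 / Real.cosh w) ^ t.re := by
    have h : (1 / (Real.cosh w : ℂ)) = ((1 / Real.cosh w : ℝ) : ℂ) := by push_cast; ring
    rw [h]
    exact Complex.norm_cpow_eq_rpow_re_of_pos (by positivity) t
  calc ‖g w‖ * ‖(1 / (Real.cosh w : ℂ)) ^ t‖ ≤ 1 * ((1 / Real.cosh w) ^ t.re) := by
        rw [h2]; exact mul_le_mul_of_nonneg_right (hb w) (by positivity)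
    _ ≤ 2 ^ t.re * Real.exp (-t.re * w) := by
        rw [one_mul]; exact sech_bound ht (le_of_lt hw)

lemma integrableOn_Iic_comp_neg {f : ℝ → ℂ}
    (hf : IntegrableOn (fun w => f (-w)) (Ioi (0:ℝ))) : IntegrableOn f (Iic (0:ℝ)) := by
  rw [← Measure.map_neg_eq_self (volume : Measure ℝ)]
  have m : MeasurableEmbedding fun x : ℝ => -x := (Homeomorph.neg ℝ).measurableEmbedding
  rw [m.integrableOn_map_iff]
  simp only [Function.comp_def, neg_preimage, neg_Iic, neg_zero]
  exact (integrableOn_Ici_iff_integrableOn_Ioi).mpr hf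

lemma subst_step (t : ℂ) (u : ℝ) :
    ∫ w : ℝ, Complex.exp ((u : ℂ) * (w : ℂ) * Complex.I) * (1 / (Real.cosh w : ℂ)) ^ t =
      Complex.exp ((t - 1) * ((Real.log 2 : ℝ) : ℂ)) *
        Complex.betaIntegral ((t + (u : ℂ) * Complex.I) / 2) ((t - (u : ℂ) * Complex.I) / 2) := by
  set a : ℂ := (t + (u : ℂ) * Complex.I) / 2 with ha
  set b : ℂ := (t - (u : ℂ) * Complex.I) / 2 with hb
  set φ : ℝ → ℝ := fun w => (1 + Real.exp (-(2 * w)))⁻¹ with hφ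
  set d : ℝ → ℝ := fun w => 2 * Real.exp (-(2 * w)) / (1 + Real.exp (-(2 * w))) ^ 2 with hd
  have hE : ∀ w : ℝ, 0 < Real.exp (-(2 * w)) := fun w => Real.exp_pos _
  have h1E : ∀ w : ℝ, 0 < 1 + Real.exp (-(2 * w)) := fun w => by linarith [hE w]
  have hderiv : ∀ w ∈ Set.univ, HasDerivWithinAt φ (d w) Set.univ w := by
    intro w _
    have hinner : HasDerivAt (fun w : ℝ => -(2 * w)) (-2) w := by
      exact (((hasDerivAt_id w).const_mul (2 : ℝ)).neg).congr_deriv (by norm_num)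
    have hexp : HasDerivAt (fun w : ℝ => Real.exp (-(2 * w)))
        (Real.exp (-(2 * w)) * (-2)) w := (Real.hasDerivAt_exp _).comp w hinner
    have hadd : HasDerivAt (fun w : ℝ => 1 + Real.exp (-(2 * w)))
        (Real.exp (-(2 * w)) * (-2)) w := hexp.const_add 1
    have := hadd.inv (h1E w).ne'
    refine this.hasDerivWithinAt.congr_deriv ?_
    rw [hd]
    field_simp
  have hinj : Set.InjOn φ Set.univ := by
    intro p _ q _ h
    have h2 : 1 + Real.exp (-(2 * p)) = 1 + Real.exp (-(2 * q)) := inv_injective h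
    have h3 : Real.exp (-(2 * p)) = Real.exp (-(2 * q)) := by linarith
    have := Real.exp_injective h3
    linarith
  have himage : φ '' Set.univ = Ioo (0 : ℝ) 1 := by
    ext y
    constructor
    · rintro ⟨w, -, rfl⟩
      exact ⟨by positivity, inv_lt_one_of_one_lt₀ (by linarith [hE w])⟩
    · rintro ⟨hy0, hy1⟩
      refine ⟨-(1 / 2) * Real.log (y⁻¹ - 1), trivial, ?_⟩
      have h4 : 0 < y⁻¹ - 1 := by
        have : 1 < y⁻¹ := (one_lt_inv₀ hy0).mpr hy1
        linarith
      show (1 + Real.exp (-(2 * (-(1 / 2) * Real.log (y⁻¹ - 1)))))⁻¹ = y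
      rw [show -(2 * (-(1 / 2) * Real.log (y⁻¹ - 1))) = Real.log (y⁻¹ - 1) by ring,
        Real.exp_log h4]
      rw [show 1 + (y⁻¹ - 1) = y⁻¹ by ring, inv_inv]
  have hbeta : Complex.betaIntegral a b =
      ∫ x in Ioo (0 : ℝ) 1, (x : ℂ) ^ (a - 1) * (1 - (x : ℂ)) ^ (b - 1) := by
    rw [Complex.betaIntegral, intervalIntegral.integral_of_le zero_le_one,
      integral_Ioc_eq_integral_Ioo]
  have hsub := integral_image_eq_integral_abs_deriv_smul MeasurableSet.univ hderiv hinj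
    (fun x : ℝ => (x : ℂ) ^ (a - 1) * (1 - (x : ℂ)) ^ (b - 1))
  rw [himage] at hsub
  have key : ∀ w : ℝ, |d w| • ((φ w : ℂ) ^ (a - 1) * (1 - (φ w : ℂ)) ^ (b - 1)) =
      Complex.exp ((1 - t) * ((Real.log 2 : ℝ) : ℂ)) *
        (Complex.exp ((u : ℂ) * (w : ℂ) * Complex.I) * (1 / (Real.cosh w : ℂ)) ^ t) := by
    intro w
    have hexpw : Real.exp (-w) * Real.exp w = 1 := by
      rw [← Real.exp_add]; norm_num
    have hexpw2 : Real.exp (-w) * Real.exp (-w) = Real.exp (-(2 * w)) := by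
      rw [← Real.exp_add]; ring_nf
    have hcosh : 1 + Real.exp (-(2 * w)) = Real.exp (-w) * (2 * Real.cosh w) := by
      rw [Real.cosh_eq]
      field_simp
      nlinarith [hexpw, hexpw2]
    have hcoshpos := Real.cosh_pos w
    have hlog1E : Real.log (1 + Real.exp (-(2 * w))) =
        -w + Real.log 2 + Real.log (Real.cosh w) := by
      rw [hcosh, Real.log_mul (Real.exp_pos _).ne' (by positivity), Real.log_exp,
        Real.log_mul two_ne_zero hcoshpos.ne']
      ring
    have hx0 : (0 : ℝ) < φ w := by positivity
    have hlogx : Real.log (φ w) = w - Real.log 2 - Real.log (Real.cosh w) := by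
      show Real.log (1 + Real.exp (-(2 * w)))⁻¹ = _
      rw [Real.log_inv, hlog1E]; ring
    have h1mx : 1 - φ w = Real.exp (-(2 * w)) / (1 + Real.exp (-(2 * w))) := by
      show 1 - (1 + Real.exp (-(2 * w)))⁻¹ = _
      field_simp
      ring
    have h1mx0 : (0 : ℝ) < 1 - φ w := by rw [h1mx]; positivity
    have hlog1mx : Real.log (1 - φ w) = -w - Real.log 2 - Real.log (Real.cosh w) := by
      rw [h1mx, Real.log_div (hE w).ne' (h1E w).ne', Real.log_exp, hlog1E]
      ring
    have hd0 : 0 < d w := by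
      rw [hd]; positivity
    have hlogd : Real.log (d w) = -Real.log 2 - 2 * Real.log (Real.cosh w) := by
      rw [hd]
      show Real.log (2 * Real.exp (-(2 * w)) / (1 + Real.exp (-(2 * w))) ^ 2) = _
      rw [Real.log_div (by positivity) (by positivity), Real.log_mul two_ne_zero (hE w).ne',
        Real.log_pow, Real.log_exp, hlog1E]
      push_cast
      ring
    -- now complex computation
    rw [abs_of_pos hd0, Complex.real_smul,
      show (1 : ℂ) - (φ w : ℂ) = ((1 - φ w : ℝ) : ℂ) by push_cast; ring,
      cpow_real_pos hx0, cpow_real_pos h1mx0, one_div_cosh_cpow,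
      show ((d w : ℝ) : ℂ) = Complex.exp ((Real.log (d w) : ℝ) : ℂ) by
        rw [← Complex.ofReal_exp, Real.exp_log hd0],
      ← Complex.exp_add, ← Complex.exp_add, ← Complex.exp_add, ← Complex.exp_add]
    congr 1
    rw [hlogx, hlog1mx, hlogd, ha, hb]
    push_cast
    ring
  calc ∫ w : ℝ, Complex.exp ((u : ℂ) * (w : ℂ) * Complex.I) * (1 / (Real.cosh w : ℂ)) ^ t
      = Complex.exp ((t - 1) * ((Real.log 2 : ℝ) : ℂ)) *
        ∫ w : ℝ, Complex.exp ((1 - t) * ((Real.log 2 : ℝ) : ℂ)) *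
          (Complex.exp ((u : ℂ) * (w : ℂ) * Complex.I) * (1 / (Real.cosh w : ℂ)) ^ t) := by
        rw [integral_const_mul, ← mul_assoc, ← Complex.exp_add,
          show (t - 1) * ((Real.log 2 : ℝ) : ℂ) + (1 - t) * ((Real.log 2 : ℝ) : ℂ) = 0 by ring,
          Complex.exp_zero, one_mul]
    _ = Complex.exp ((t - 1) * ((Real.log 2 : ℝ) : ℂ)) * Complex.betaIntegral a b := by
        rw [hbeta, hsub, setIntegral_univ]
        congr 1
        exact integral_congr_ae (Filter.Eventually.of_forall fun w => (key w).symm)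

lemma norm_exp_mul_I (u w : ℝ) : ‖Complex.exp ((u : ℂ) * (w : ℂ) * Complex.I)‖ = 1 := by
  rw [Complex.norm_exp]
  simp [Complex.mul_re]

lemma continuous_exp_uwI (u : ℝ) :
    Continuous fun w : ℝ => Complex.exp ((u : ℂ) * (w : ℂ) * Complex.I) :=
  Complex.continuous_exp.comp
    (((continuous_const.mul Complex.continuous_ofReal).mul continuous_const))

lemma integrableOn_fIoi (t : ℂ) (ht : 0 < t.re) (u : ℝ) :
    IntegrableOn
      (fun w : ℝ => Complex.exp ((u : ℂ) * (w : ℂ) * Complex.I) * (1 / (Real.cosh w : ℂ)) ^ t)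
      (Ioi 0) :=
  integrableOn_Ioi_sech_mul t ht _ (continuous_exp_uwI u) (fun w => (norm_exp_mul_I u w).le)

lemma integrableOn_fIoi_neg (t : ℂ) (ht : 0 < t.re) (u : ℝ) :
    IntegrableOn
      (fun w : ℝ =>
        Complex.exp ((u : ℂ) * ((-w : ℝ) : ℂ) * Complex.I) * (1 / (Real.cosh (-w) : ℂ)) ^ t)
      (Ioi 0) := by
  have h := integrableOn_Ioi_sech_mul t ht
    (fun w : ℝ => Complex.exp ((-u : ℝ) * (w : ℂ) * Complex.I))
    (by simpa using continuous_exp_uwI (-u)) (fun w => by simpa using (norm_exp_mul_I (-u) w).le)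
  refine h.congr_fun (fun w _ => ?_) measurableSet_Ioi
  rw [Real.cosh_neg]
  norm_num

lemma even_step (t : ℂ) (ht : 0 < t.re) (u : ℝ) :
    ∫ w : ℝ, Complex.exp ((u : ℂ) * (w : ℂ) * Complex.I) * (1 / (Real.cosh w : ℂ)) ^ t =
      2 * ∫ w in Ioi (0:ℝ),
        (Real.cos (u * w) : ℂ) * (1 / (Real.cosh w : ℂ)) ^ t := by
  set f : ℝ → ℂ :=
    fun w => Complex.exp ((u : ℂ) * (w : ℂ) * Complex.I) * (1 / (Real.cosh w : ℂ)) ^ t with hf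
  have hIoi : IntegrableOn f (Ioi 0) := integrableOn_fIoi t ht u
  have hneg : IntegrableOn (fun w => f (-w)) (Ioi 0) := by
    have := integrableOn_fIoi_neg t ht u
    simpa [hf] using this
  have hIic : IntegrableOn f (Iic 0) := integrableOn_Iic_comp_neg hneg
  rw [← intervalIntegral.integral_Iic_add_Ioi hIic hIoi]
  have h1 : ∫ w in Iic (0:ℝ), f w = ∫ w in Ioi (0:ℝ), f (-w) := by
    rw [integral_comp_neg_Ioi]
    norm_num
  rw [h1, ← integral_add hneg hIoi]
  rw [show (2 : ℂ) * ∫ w in Ioi (0:ℝ), (Real.cos (u * w) : ℂ) * (1 / (Real.cosh w : ℂ)) ^ t =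
    ∫ w in Ioi (0:ℝ), 2 * ((Real.cos (u * w) : ℂ) * (1 / (Real.cosh w : ℂ)) ^ t) from
    (integral_const_mul 2 _).symm]
  refine setIntegral_congr_fun measurableSet_Ioi (fun w _ => ?_)
  have key : ∀ z : ℂ, Complex.exp (-z * Complex.I) + Complex.exp (z * Complex.I) =
      2 * Complex.cos z := by
    intro z
    rw [Complex.exp_mul_I, Complex.exp_mul_I]
    simp [Complex.cos_neg, Complex.sin_neg]
    ring
  show f (-w) + f w = _
  rw [hf]
  simp only
  rw [Real.cosh_neg, show ((u : ℂ) * ((-w : ℝ) : ℂ) * Complex.I) =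
      (-((u : ℂ) * (w : ℂ))) * Complex.I by push_cast; ring,
    show ((u : ℂ) * (w : ℂ) * Complex.I) = ((u : ℂ) * (w : ℂ)) * Complex.I from rfl,
    ← add_mul, key ((u : ℂ) * (w : ℂ)),
    show ((Real.cos (u * w) : ℝ) : ℂ) = Complex.cos ((u : ℂ) * (w : ℂ)) by
      rw [← Complex.ofReal_mul, Complex.ofReal_cos]]
  ring

/-- Mellin transform of `f_u`: for `Re t > 0`,
`∫_ℝ e^{tx} f_u(x) dx = 2^{t-2} Γ((t+iu)/2) Γ((t-iu)/2)`, with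
`2^{t-2} = exp((t-2) log 2)`; for real `t > 0` the right-hand side equals
`2^{t-2} |Γ((t+iu)/2)|²`. -/
theorem besselF_mellin (t : ℂ) (ht : 0 < t.re) (u : ℝ) :
    (∫ x : ℝ, Complex.exp (t * (x : ℂ)) * ((besselF u x : ℝ) : ℂ)) =
      Complex.exp ((t - 2) * ((Real.log 2 : ℝ) : ℂ)) *
        Complex.Gamma ((t + (u : ℂ) * Complex.I) / 2) *
        Complex.Gamma ((t - (u : ℂ) * Complex.I) / 2) ∧
    ∀ s : ℝ, 0 < s →
      Complex.exp (((s : ℂ) - 2) * ((Real.log 2 : ℝ) : ℂ)) *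
          Complex.Gamma (((s : ℂ) + (u : ℂ) * Complex.I) / 2) *
          Complex.Gamma (((s : ℂ) - (u : ℂ) * Complex.I) / 2) =
        (((2 : ℝ) ^ (s - 2) *
          ‖Complex.Gamma (((s : ℂ) + (u : ℂ) * Complex.I) / 2)‖ ^ 2 : ℝ) : ℂ) := by
  constructor
  · -- main formula
    set a : ℂ := (t + (u : ℂ) * Complex.I) / 2 with ha
    set b : ℂ := (t - (u : ℂ) * Complex.I) / 2 with hb
    set G : ℝ → ℝ → ℂ := fun x w =>
      Complex.exp (t * x) * ((Real.exp (-Real.exp x * Real.cosh w) * Real.cos (u * w) : ℝ) : ℂ)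
      with hG
    have step0 : (∫ x : ℝ, Complex.exp (t * (x : ℂ)) * ((besselF u x : ℝ) : ℂ)) =
        ∫ x : ℝ, ∫ w in Ioi (0:ℝ), G x w := by
      refine integral_congr_ae (Filter.Eventually.of_forall fun x => ?_)
      show Complex.exp (t * (x : ℂ)) * ((besselF u x : ℝ) : ℂ) = ∫ w in Ioi (0:ℝ), G x w
      have h1 : ((besselF u x : ℝ) : ℂ) =
          ∫ w in Ioi (0:ℝ), ((Real.exp (-Real.exp x * Real.cosh w) * Real.cos (u * w) : ℝ) : ℂ) := by
        rw [besselF, Kiu]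
        exact (integral_ofReal).symm
      rw [h1, ← integral_const_mul]
    -- measurability of the kernel
    have hcont : Continuous (Function.uncurry G) := by
      rw [hG]
      apply Continuous.mul
      · exact Complex.continuous_exp.comp
          (continuous_const.mul (Complex.continuous_ofReal.comp continuous_fst))
      · refine Complex.continuous_ofReal.comp (Continuous.mul ?_ ?_)
        · exact Real.continuous_exp.comp
            (((Real.continuous_exp.comp continuous_fst).neg).mul
              (Real.continuous_cosh.comp continuous_snd))
        · exact Real.continuous_cos.comp (continuous_const.mul continuous_snd)
    have cond1 : ∀ᵐ w ∂(volume.restrict (Ioi (0:ℝ))), Integrable (fun x => G x w) := by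
      refine Filter.Eventually.of_forall fun w => ?_
      have base := (integrable_gammaX t ht (Real.cosh_pos w)).mul_const
        ((Real.cos (u * w) : ℝ) : ℂ)
      refine base.congr (Filter.Eventually.of_forall fun x => ?_)
      show _ = Complex.exp (t * x) *
        ((Real.exp (-Real.exp x * Real.cosh w) * Real.cos (u * w) : ℝ) : ℂ)
      rw [show -Real.exp x * Real.cosh w = -(Real.cosh w * Real.exp x) by ring]
      push_cast
      ring
    have hΓ : 0 < Real.Gamma t.re := Real.Gamma_pos_of_pos ht
    have hval : ∀ w : ℝ, (∫ x : ℝ, ‖G x w‖) =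
        |Real.cos (u * w)| * ((1 / Real.cosh w) ^ t.re * Real.Gamma t.re) := by
      intro w
      have hnorm : ∀ x : ℝ, ‖G x w‖ =
          Real.exp (t.re * x) * Real.exp (-(Real.cosh w * Real.exp x)) * |Real.cos (u * w)| := by
        intro x
        rw [hG]
        simp only
        rw [norm_mul, Complex.norm_exp,
          show (t * (x : ℂ)).re = t.re * x by simp [Complex.mul_re],
          Complex.norm_real, Real.norm_eq_abs, abs_mul, abs_of_pos (Real.exp_pos _),
          show -Real.exp x * Real.cosh w = -(Real.cosh w * Real.exp x) by ring]
        ring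
      simp_rw [hnorm]
      rw [integral_mul_const, integral_gammaX_real t.re ht (Real.cosh_pos w)]
      ring
    have cond2 : Integrable (fun w => ∫ x : ℝ, ‖G x w‖) (volume.restrict (Ioi (0:ℝ))) := by
      rw [show (fun w => ∫ x : ℝ, ‖G x w‖) =
        fun w => |Real.cos (u * w)| * ((1 / Real.cosh w) ^ t.re * Real.Gamma t.re) from
        funext hval]
      have hbound : Integrable
          (fun w => (2:ℝ) ^ t.re * Real.exp (-t.re * w) * Real.Gamma t.re)
          (volume.restrict (Ioi (0:ℝ))) :=
        ((exp_neg_integrableOn_Ioi 0 ht).const_mul _).mul_const _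
      refine hbound.mono' ?_ ?_
      · have hc1 : Continuous fun w : ℝ => (1 / Real.cosh w) ^ t.re := by
          rw [show (fun w : ℝ => (1 / Real.cosh w) ^ t.re) =
            fun w => Real.exp (Real.log (1 / Real.cosh w) * t.re) from
            funext fun w => by rw [Real.rpow_def_of_pos (by positivity)]]
          exact Real.continuous_exp.comp
            (((continuous_const.div Real.continuous_cosh fun x => (Real.cosh_pos x).ne').log
              fun x => (by positivity : (0:ℝ) < 1 / Real.cosh x).ne').mul continuous_const)
        exact (((Real.continuous_cos.comp (continuous_const.mul continuous_id)).abs).mul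
          (hc1.mul continuous_const)).aestronglyMeasurable.restrict
      · refine (ae_restrict_iff' measurableSet_Ioi).mpr
          (Filter.Eventually.of_forall fun w hw => ?_)
        have h2 := sech_bound ht (le_of_lt hw)
        have h3 : |Real.cos (u * w)| ≤ 1 := Real.abs_cos_le_one _
        have h4 : (0:ℝ) ≤ (1 / Real.cosh w) ^ t.re * Real.Gamma t.re :=
          mul_nonneg (Real.rpow_nonneg (by positivity) _) hΓ.le
        rw [Real.norm_eq_abs, abs_of_nonneg (mul_nonneg (abs_nonneg _) h4)]
        calc |Real.cos (u * w)| * ((1 / Real.cosh w) ^ t.re * Real.Gamma t.re)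
            ≤ 1 * ((1 / Real.cosh w) ^ t.re * Real.Gamma t.re) :=
              mul_le_mul_of_nonneg_right h3 h4
          _ = (1 / Real.cosh w) ^ t.re * Real.Gamma t.re := one_mul _
          _ ≤ 2 ^ t.re * Real.exp (-t.re * w) * Real.Gamma t.re :=
              mul_le_mul_of_nonneg_right h2 hΓ.le
    have hint : Integrable (Function.uncurry G)
        (volume.prod (volume.restrict (Ioi (0:ℝ)))) :=
      (integrable_prod_iff' hcont.aestronglyMeasurable).mpr ⟨cond1, cond2⟩
    have hswap := integral_integral_swap hint
    have hinner : ∀ w : ℝ, (∫ x : ℝ, G x w) =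
        ((1 / (Real.cosh w : ℂ)) ^ t * Complex.Gamma t) * (Real.cos (u * w) : ℂ) := by
      intro w
      rw [show (fun x => G x w) = fun x : ℝ =>
          (Complex.exp (t * x) * (Real.exp (-(Real.cosh w * Real.exp x)) : ℂ)) *
            ((Real.cos (u * w) : ℝ) : ℂ) from funext fun x => by
        show Complex.exp (t * x) *
            ((Real.exp (-Real.exp x * Real.cosh w) * Real.cos (u * w) : ℝ) : ℂ) = _
        rw [show -Real.exp x * Real.cosh w = -(Real.cosh w * Real.exp x) by ring]
        push_cast
        ring]
      rw [integral_mul_const, integral_gammaX t ht (Real.cosh_pos w)]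
    rw [step0, hswap]
    have hpull : ∫ w in Ioi (0:ℝ), (∫ x : ℝ, G x w) =
        Complex.Gamma t *
          ∫ w in Ioi (0:ℝ), (Real.cos (u * w) : ℂ) * (1 / (Real.cosh w : ℂ)) ^ t := by
      rw [← integral_const_mul]
      refine setIntegral_congr_fun measurableSet_Ioi fun w _ => ?_
      rw [hinner w]
      ring
    rw [hpull]
    have h5 := (even_step t ht u).symm.trans (subst_step t u)
    have h6 : Complex.exp (((Real.log 2 : ℝ) : ℂ)) = 2 := by
      rw [← Complex.ofReal_exp, Real.exp_log two_pos]
      norm_num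
    have h7 : Complex.exp ((t - 1) * ((Real.log 2 : ℝ) : ℂ)) =
        Complex.exp ((t - 2) * ((Real.log 2 : ℝ) : ℂ)) * 2 := by
      calc Complex.exp ((t - 1) * ((Real.log 2 : ℝ) : ℂ))
          = Complex.exp ((t - 2) * ((Real.log 2 : ℝ) : ℂ) + ((Real.log 2 : ℝ) : ℂ)) := by
            congr 1; ring
        _ = Complex.exp ((t - 2) * ((Real.log 2 : ℝ) : ℂ)) *
              Complex.exp (((Real.log 2 : ℝ) : ℂ)) := Complex.exp_add _ _
        _ = Complex.exp ((t - 2) * ((Real.log 2 : ℝ) : ℂ)) * 2 := by rw [h6]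
    have hX : (∫ w in Ioi (0:ℝ), (Real.cos (u * w) : ℂ) * (1 / (Real.cosh w : ℂ)) ^ t) =
        Complex.exp ((t - 1) * ((Real.log 2 : ℝ) : ℂ)) * Complex.betaIntegral a b / 2 := by
      rw [eq_div_iff (two_ne_zero)]
      linear_combination h5
    rw [hX, h7]
    have hare : 0 < a.re := by
      rw [ha, show ((t + (u:ℂ) * Complex.I) / 2).re = t.re / 2 by
        simp [Complex.div_re, Complex.normSq]]
      linarith
    have hbre : 0 < b.re := by
      rw [hb, show ((t - (u:ℂ) * Complex.I) / 2).re = t.re / 2 by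
        simp [Complex.div_re, Complex.normSq, Complex.sub_re]]
      linarith
    have hab : Complex.Gamma a * Complex.Gamma b = Complex.Gamma t * Complex.betaIntegral a b := by
      rw [Complex.Gamma_mul_Gamma_eq_betaIntegral hare hbre, show a + b = t by rw [ha, hb]; ring]
    linear_combination (-(Complex.exp ((t - 2) * ((Real.log 2 : ℝ) : ℂ)))) * hab
  · -- real positive case
    intro s hs
    have h1 : ((s:ℂ) - (u:ℂ) * Complex.I) / 2 =
        (starRingEnd ℂ) (((s:ℂ) + (u:ℂ) * Complex.I) / 2) := by
      rw [map_div₀, map_add, Complex.conj_ofReal, map_mul, Complex.conj_I, Complex.conj_ofReal,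
        map_ofNat]
      ring
    rw [h1, Complex.Gamma_conj, mul_assoc, Complex.mul_conj, Complex.normSq_eq_norm_sq,
      show (((s:ℂ) - 2) * ((Real.log 2 : ℝ) : ℂ)) = (((s - 2) * Real.log 2 : ℝ) : ℂ) by
        push_cast; ring,
      ← Complex.ofReal_exp,
      show Real.exp ((s - 2) * Real.log 2) = (2:ℝ) ^ (s - 2) by
        rw [Real.rpow_def_of_pos (by norm_num)]; ring_nf]
    push_cast
    ring
end
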